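/- Suppose V is independent of C (with V uniform on (0,1)) and the potential outcome Y*(d) is negatively regression dependent on C given V, i.e. for all y, almost every v, and all c ≤ c̃ in the support of C: ℙ[Y*(d) ≤ y | C = c̃, V = v] ≥ ℙ[Y*(d) ≤ y | C = c, V = v]. Then for every y, almost every v, and every δ > 0 with y+δ in the support of C, the following two-sided bound holds: ℙ(C ≥ y+δ) · ℙ[Y*(d) ≤ y | C = y+δ, V = v] ≤ ℙ[Y*(d) ≤ y | V = v] ≤ ℙ(C ≤ y) + ℙ(C ≥ y+δ) + ℙ(y ≤ C ≤ y+δ) · ℙ[Y*(d) ≤ y | C = y+δ, V = v]. -/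

import Mathlib

open MeasureTheory ProbabilityTheory Set
open scoped ENNReal

noncomputable section

/-- The support of the distribution of a real random variable `C`: the set of points all of
whose neighborhoods have positive probability. -/
def distSupport {Ω : Type*} [MeasurableSpace Ω] (μ : Measure Ω) (C : Ω → ℝ) : Set ℝ :=
  {c : ℝ | ∀ ε > 0, 0 < μ {ω | |C ω - c| < ε}}

/-- If `V` is independent of `C` (with `V` uniform on `(0,1)` given `C`) and the potential
outcome `Y*(d)` is negatively regression dependent on `C` given `V`, then for every `y`,
almost every `v`, and every `δ > 0` with `y + δ` in the support of `C`:
`ℙ(C ≥ y+δ) · ℙ[Y*(d) ≤ y ∣ C = y+δ, V = v] ≤ ℙ[Y*(d) ≤ y ∣ V = v]` and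
`ℙ[Y*(d) ≤ y ∣ V = v]
  ≤ ℙ(C ≤ y) + ℙ(C ≥ y+δ) + ℙ(y ≤ C ≤ y+δ) · ℙ[Y*(d) ≤ y ∣ C = y+δ, V = v]`. -/
theorem dmtr_bounds_of_negative_regression_dependence
    {Ω : Type*} [MeasurableSpace Ω] [StandardBorelSpace Ω] [Nonempty Ω]
    (μ : Measure Ω) [IsProbabilityMeasure μ]
    -- the potential outcome `Y*(d)`, the latent heterogeneity `V`, the censoring variable `C`
    (Yd V C : Ω → ℝ)
    (hYd : Measurable Yd) (hV : Measurable V) (hC : Measurable C)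
    (hYdnn : ∀ ω, 0 ≤ Yd ω) (hCnn : ∀ ω, 0 ≤ C ω)
    (hVrange : ∀ ω, V ω ∈ Set.Ioo (0 : ℝ) 1)
    -- `V` is independent of `C`, with conditional distribution Uniform(0,1)
    (hVC : IndepFun V C μ)
    (hVunif : ∀ᵐ c ∂(μ.map C),
      condDistrib V C μ c = volume.restrict (Set.Ioo (0 : ℝ) 1))
    -- negative regression dependence of `Y*(d)` on `C` given `V`:
    -- `c ↦ ℙ[Y*(d) ≤ y ∣ C = c, V = v]` is nondecreasing on the support of `C`
    (hNRD : ∀ y : ℝ, ∀ᵐ v ∂(volume.restrict (Set.Ioo (0 : ℝ) 1)),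
      ∀ c ∈ distSupport μ C, ∀ c' ∈ distSupport μ C, c ≤ c' →
        condDistrib Yd (fun ω => (C ω, V ω)) μ (c, v) (Set.Iic y)
          ≤ condDistrib Yd (fun ω => (C ω, V ω)) μ (c', v) (Set.Iic y)) :
    ∀ y : ℝ, ∀ᵐ v ∂(volume.restrict (Set.Ioo (0 : ℝ) 1)),
      ∀ δ : ℝ, 0 < δ → y + δ ∈ distSupport μ C →
        (μ {ω | y + δ ≤ C ω}).toReal *
            (condDistrib Yd (fun ω => (C ω, V ω)) μ (y + δ, v) (Set.Iic y)).toReal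
          ≤ (condDistrib Yd V μ v (Set.Iic y)).toReal ∧
        (condDistrib Yd V μ v (Set.Iic y)).toReal
          ≤ (μ {ω | C ω ≤ y}).toReal + (μ {ω | y + δ ≤ C ω}).toReal +
              (μ {ω | y ≤ C ω ∧ C ω ≤ y + δ}).toReal *
                (condDistrib Yd (fun ω => (C ω, V ω)) μ (y + δ, v) (Set.Iic y)).toReal := by
  set ν : Measure ℝ := μ.map C with hν
  set unif : Measure ℝ := volume.restrict (Set.Ioo (0 : ℝ) 1) with hunif
  set κ : Kernel (ℝ × ℝ) ℝ := condDistrib Yd (fun ω => (C ω, V ω)) μ with hκdef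
  have hCV : Measurable fun ω => (C ω, V ω) := hC.prodMk hV
  haveI : IsProbabilityMeasure ν := Measure.isProbabilityMeasure_map hC.aemeasurable
  haveI : IsProbabilityMeasure unif := by
    constructor
    rw [hunif, Measure.restrict_apply_univ, Real.volume_Ioo]
    norm_num
  -- the law of `(C, V)` is the product `ν.prod unif`
  have hmapCV : μ.map (fun ω => (C ω, V ω)) = ν.prod unif := by
    have h1 : μ.map (fun ω => (C ω, V ω)) = ν ⊗ₘ condDistrib V C μ := by
      rw [condDistrib, hν, ← Measure.fst_map_prodMk (X := C) hV]
      exact (Measure.disintegrate ..).symm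
    rw [h1, Measure.compProd_congr (η := Kernel.const ℝ unif) ?_, Measure.compProd_const]
    · filter_upwards [hVunif] with c hc
      rw [Kernel.const_apply, hc]
  -- the law of `V` is `unif`
  have hmapV : μ.map V = unif := by
    rw [← Measure.snd_map_prodMk (Y := V) hC, hmapCV, Measure.snd_prod]
  -- the disintegration of the law of `((C,V), Yd)`
  have hbig : μ.map (fun ω => ((C ω, V ω), Yd ω)) = (ν.prod unif) ⊗ₘ κ := by
    rw [hκdef, condDistrib, ← hmapCV, ← Measure.fst_map_prodMk (X := fun ω => (C ω, V ω)) hYd]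
    exact (Measure.disintegrate ..).symm
  -- the averaged kernel `η v = ∫ κ (c, v) dν c`
  set η : Kernel ℝ ℝ :=
    Kernel.snd ((Kernel.const ℝ ν) ⊗ₖ (κ.comap Prod.swap measurable_swap)) with hηdef
  have hηapp : ∀ (v : ℝ) (A : Set ℝ), MeasurableSet A → η v A = ∫⁻ c, κ (c, v) A ∂ν := by
    intro v A hA
    rw [hηdef, Kernel.snd_apply' _ _ hA,
      Kernel.compProd_apply (show MeasurableSet (Prod.snd ⁻¹' A : Set (ℝ × ℝ)) from measurable_snd hA)]
    simp only [Kernel.const_apply, Kernel.comap_apply, Prod.swap_prod_mk, mem_setOf_eq, preimage_preimage, preimage_id',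
      setOf_mem_eq]
  -- the law of `(V, Yd)` disintegrates as `unif ⊗ₘ η`
  have hρ : μ.map (fun ω => (V ω, Yd ω)) = unif ⊗ₘ η := by
    have hmm : Measurable fun p : (ℝ × ℝ) × ℝ => (p.1.2, p.2) :=
      (measurable_snd.comp measurable_fst).prodMk measurable_snd
    have hcomp : μ.map (fun ω => (V ω, Yd ω))
        = (μ.map (fun ω => ((C ω, V ω), Yd ω))).map (fun p => (p.1.2, p.2)) := by
      rw [Measure.map_map hmm (hCV.prodMk hYd)]
      rfl
    ext s hs
    have hFmeas : Measurable fun cv : ℝ × ℝ => κ cv (Prod.mk cv.2 ⁻¹' s) :=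
      Kernel.measurable_kernel_prodMk_left (κ := κ) (hmm hs)
    calc μ.map (fun ω => (V ω, Yd ω)) s
        = ((ν.prod unif) ⊗ₘ κ) ((fun p : (ℝ × ℝ) × ℝ => (p.1.2, p.2)) ⁻¹' s) := by
          rw [hcomp, hbig, Measure.map_apply hmm hs]
      _ = ∫⁻ cv, κ cv (Prod.mk cv.2 ⁻¹' s) ∂(ν.prod unif) := by
          rw [Measure.compProd_apply (hmm hs)]
          rfl
      _ = ∫⁻ c, ∫⁻ v, κ (c, v) (Prod.mk v ⁻¹' s) ∂unif ∂ν := by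
          rw [lintegral_prod _ hFmeas.aemeasurable]
      _ = ∫⁻ v, ∫⁻ c, κ (c, v) (Prod.mk v ⁻¹' s) ∂ν ∂unif := by
          exact lintegral_lintegral_swap hFmeas.aemeasurable
      _ = ∫⁻ v, η v (Prod.mk v ⁻¹' s) ∂unif := by
          refine lintegral_congr fun v => ?_
          rw [hηapp v _ (measurable_prodMk_left hs)]
      _ = (unif ⊗ₘ η) s := (Measure.compProd_apply hs).symm
  -- a.e. uniqueness of the conditional distribution
  have huniq : ∀ᵐ v ∂unif, η v = condDistrib Yd V μ v := by
    rw [← hmapV]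
    exact (condDistrib_ae_eq_of_measure_eq_compProd V hYd.aemeasurable (κ := η)
      (by rw [hρ, hmapV])).mono fun _ h => h.symm
  -- almost every point (for the law of `C`) is in the support
  have hsupp : ∀ᵐ c ∂ν, c ∈ distSupport μ C := by
    rw [ae_iff]
    refine measure_null_of_locally_null _ fun c hc => ?_
    simp only [distSupport, mem_setOf_eq, not_forall, exists_prop] at hc
    obtain ⟨ε, hε, h0⟩ := hc
    have h0' : μ {ω | |C ω - c| < ε} = 0 := by
      simpa [not_lt, le_zero_iff] using h0
    refine ⟨Metric.ball c ε, mem_nhdsWithin_of_mem_nhds (Metric.ball_mem_nhds c hε), ?_⟩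
    rw [hν, Measure.map_apply hC measurableSet_ball]
    have hball : C ⁻¹' Metric.ball c ε = {ω | |C ω - c| < ε} := by
      ext ω; simp [Metric.mem_ball, Real.dist_eq]
    rw [hball]
    exact h0'
  intro y
  filter_upwards [huniq, hNRD y] with v hηv hmono
  intro δ hδ hyδ
  set m : ℝ≥0∞ := κ (y + δ, v) (Set.Iic y) with hm
  have hkey : condDistrib Yd V μ v (Set.Iic y) = ∫⁻ c, κ (c, v) (Set.Iic y) ∂ν := by
    rw [← hηv, hηapp v _ measurableSet_Iic]
  -- identify the probabilities of events about C with ν of intervals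
  have hA : μ {ω | C ω ≤ y} = ν (Set.Iic y) := by
    rw [hν, Measure.map_apply hC measurableSet_Iic]; rfl
  have hB : μ {ω | y + δ ≤ C ω} = ν (Set.Ici (y + δ)) := by
    rw [hν, Measure.map_apply hC measurableSet_Ici]; rfl
  have hD : μ {ω | y ≤ C ω ∧ C ω ≤ y + δ} = ν (Set.Icc y (y + δ)) := by
    rw [hν, Measure.map_apply hC measurableSet_Icc]; rfl
  -- lower bound in ℝ≥0∞
  have hlow : ν (Set.Ici (y + δ)) * m ≤ ∫⁻ c, κ (c, v) (Set.Iic y) ∂ν := by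
    calc ν (Set.Ici (y + δ)) * m = ∫⁻ _ in Set.Ici (y + δ), m ∂ν := by
          rw [setLIntegral_const, mul_comm]
      _ ≤ ∫⁻ c in Set.Ici (y + δ), κ (c, v) (Set.Iic y) ∂ν := by
          refine lintegral_mono_ae ?_
          filter_upwards [ae_restrict_mem measurableSet_Ici, ae_restrict_of_ae hsupp]
            with c hc hcs
          exact hmono (y + δ) hyδ c hcs hc
      _ ≤ ∫⁻ c, κ (c, v) (Set.Iic y) ∂ν := lintegral_mono' Measure.restrict_le_self le_rfl
  -- upper bound in ℝ≥0∞
  have hup : ∫⁻ c, κ (c, v) (Set.Iic y) ∂ν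
      ≤ ν (Set.Iic y) + ν (Set.Ici (y + δ)) + ν (Set.Icc y (y + δ)) * m := by
    have hsplit : ∫⁻ c, κ (c, v) (Set.Iic y) ∂ν
        = (∫⁻ c in Set.Iic y, κ (c, v) (Set.Iic y) ∂ν)
          + ((∫⁻ c in Set.Ioo y (y + δ), κ (c, v) (Set.Iic y) ∂ν)
            + (∫⁻ c in Set.Ici (y + δ), κ (c, v) (Set.Iic y) ∂ν)) := by
      rw [← lintegral_add_compl (fun c => κ (c, v) (Set.Iic y)) measurableSet_Iic (μ := ν),
        compl_Iic, ← Set.Ioo_union_Ici_eq_Ioi (lt_add_of_pos_right y hδ),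
        lintegral_union measurableSet_Ici
          (Set.disjoint_left.mpr fun c hc hc' => absurd hc.2 (not_lt.mpr hc'))]
    have h1 : ∫⁻ c in Set.Iic y, κ (c, v) (Set.Iic y) ∂ν ≤ ν (Set.Iic y) := by
      calc ∫⁻ c in Set.Iic y, κ (c, v) (Set.Iic y) ∂ν
          ≤ ∫⁻ _ in Set.Iic y, 1 ∂ν := lintegral_mono fun c => prob_le_one
        _ = ν (Set.Iic y) := setLIntegral_one _
    have h3 : ∫⁻ c in Set.Ici (y + δ), κ (c, v) (Set.Iic y) ∂ν ≤ ν (Set.Ici (y + δ)) := by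
      calc ∫⁻ c in Set.Ici (y + δ), κ (c, v) (Set.Iic y) ∂ν
          ≤ ∫⁻ _ in Set.Ici (y + δ), 1 ∂ν := lintegral_mono fun c => prob_le_one
        _ = ν (Set.Ici (y + δ)) := setLIntegral_one _
    have h2 : ∫⁻ c in Set.Ioo y (y + δ), κ (c, v) (Set.Iic y) ∂ν
        ≤ ν (Set.Icc y (y + δ)) * m := by
      calc ∫⁻ c in Set.Ioo y (y + δ), κ (c, v) (Set.Iic y) ∂ν
          ≤ ∫⁻ _ in Set.Ioo y (y + δ), m ∂ν := by
            refine lintegral_mono_ae ?_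
            filter_upwards [ae_restrict_mem measurableSet_Ioo, ae_restrict_of_ae hsupp]
              with c hc hcs
            exact hmono c hcs (y + δ) hyδ hc.2.le
        _ = m * ν (Set.Ioo y (y + δ)) := setLIntegral_const _ _
        _ ≤ m * ν (Set.Icc y (y + δ)) :=
            mul_le_mul_right (measure_mono Set.Ioo_subset_Icc_self) m
        _ = ν (Set.Icc y (y + δ)) * m := mul_comm _ _
    calc ∫⁻ c, κ (c, v) (Set.Iic y) ∂ν
        ≤ ν (Set.Iic y) + (ν (Set.Icc y (y + δ)) * m + ν (Set.Ici (y + δ))) := by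
          rw [hsplit]; exact add_le_add h1 (add_le_add h2 h3)
      _ = ν (Set.Iic y) + ν (Set.Ici (y + δ)) + ν (Set.Icc y (y + δ)) * m := by ring
  -- pass to real numbers
  have hmne : m ≠ ∞ := measure_ne_top _ _
  have hLne : condDistrib Yd V μ v (Set.Iic y) ≠ ∞ := measure_ne_top _ _
  constructor
  · rw [hB, ← ENNReal.toReal_mul]
    exact ENNReal.toReal_mono hLne (by rw [hkey]; exact hlow)
  · rw [hA, hB, hD, ← ENNReal.toReal_mul,
      ← ENNReal.toReal_add (measure_ne_top _ _) (measure_ne_top _ _),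
      ← ENNReal.toReal_add (ENNReal.add_ne_top.mpr ⟨measure_ne_top _ _, measure_ne_top _ _⟩)
        (ENNReal.mul_ne_top (measure_ne_top _ _) hmne)]
    exact ENNReal.toReal_mono
      (by
        refine ENNReal.add_ne_top.mpr ⟨?_, ENNReal.mul_ne_top (measure_ne_top _ _) hmne⟩
        exact ENNReal.add_ne_top.mpr ⟨measure_ne_top _ _, measure_ne_top _ _⟩)
      (by rw [hkey]; exact hup)
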